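/- Let M₀ be a Kripke model whose frame F₀ is a finite directed partial pre-order with a largest cluster [b], and let w₀ lie in the smallest cluster. Form the partial unravelling F: keep the top cluster [b], and replace each other world u by pairs (u,t) where t is a maximal chain from [w₀] to [u] in the quotient order, ordered by end-extension of paths (and the F₀-order within clusters), with [b] above everything. Then F is a baled pre-tree, and the natural correspondence (copying valuations from u to each (u,t)) is a bisimulation between the resulting model M and M₀; consequently the same modal formulas hold at w₀ in M₀ and at any copy of w₀ in M. -/

import Mathlib

/-- Modal formulas over propositional variables of type `α`. -/
inductive ModalFormula (α : Type) : Type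
  | var : α → ModalFormula α
  | fls : ModalFormula α
  | imp : ModalFormula α → ModalFormula α → ModalFormula α
  | box : ModalFormula α → ModalFormula α

namespace ModalFormula

variable {α : Type}

def neg (φ : ModalFormula α) : ModalFormula α := φ.imp fls
def dia (φ : ModalFormula α) : ModalFormula α := (φ.neg.box).neg
def conj (φ ψ : ModalFormula α) : ModalFormula α := (φ.imp ψ.neg).neg
def disj (φ ψ : ModalFormula α) : ModalFormula α := φ.neg.imp ψ

/-- Kripke satisfaction at a world, for a model with worlds `W`,
accessibility `R` and valuation `V`. -/
def sat {W : Type} (R : W → W → Prop) (V : α → W → Prop) : W → ModalFormula α → Prop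
  | w, var p => V p w
  | _, fls => False
  | w, imp φ ψ => sat R V w φ → sat R V w ψ
  | w, box φ => ∀ v, R w v → sat R V v φ

end ModalFormula

open ModalFormula

/-- Mutual accessibility: u and v lie in the same cluster. -/
def equivRel {F₀ : Type} (R₀ : F₀ → F₀ → Prop) (u v : F₀) : Prop :=
  R₀ u v ∧ R₀ v u

/-- t is a path from the cluster of w₀ to the cluster of u: a maximal
linearly-ordered, cluster-closed subset of the interval [[w₀],[u]]
(working with unions of clusters instead of the quotient order). -/
def IsPath {F₀ : Type} (R₀ : F₀ → F₀ → Prop) (w₀ u : F₀) (t : Set F₀) : Prop :=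
  t ⊆ {x | R₀ w₀ x ∧ R₀ x u} ∧
  (∀ x ∈ t, ∀ y, equivRel R₀ x y → y ∈ t) ∧
  (∀ x ∈ t, ∀ y ∈ t, R₀ x y ∨ R₀ y x) ∧
  (∀ s : Set F₀, t ⊆ s → s ⊆ {x | R₀ w₀ x ∧ R₀ x u} →
    (∀ x ∈ s, ∀ y, equivRel R₀ x y → y ∈ s) →
    (∀ x ∈ s, ∀ y ∈ s, R₀ x y ∨ R₀ y x) → s = t)

/-- The partial unravelling of the frame (F₀, R₀) from w₀, keeping the top
cluster [b] intact and replacing every other world u by pairs (u, t) where t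
is a path from [w₀] to [u]. -/
def Unravel {F₀ : Type} (R₀ : F₀ → F₀ → Prop) (w₀ b : F₀) : Type :=
  {x : F₀ // equivRel R₀ x b} ⊕
    {p : F₀ × Set F₀ // ¬ equivRel R₀ p.1 b ∧ IsPath R₀ w₀ p.1 p.2}

/-- Accessibility on the unravelling: within the top cluster everything is
related; (u,t) ≤ (v,s) iff t end-extends to s (here: t ⊆ s, paths being
initial chains from the root) and R₀ u v; and the top cluster is maximal. -/
def unravelRel {F₀ : Type} (R₀ : F₀ → F₀ → Prop) (w₀ b : F₀) :
    Unravel R₀ w₀ b → Unravel R₀ w₀ b → Prop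
  | Sum.inl _, Sum.inl _ => True
  | Sum.inl _, Sum.inr _ => False
  | Sum.inr _, Sum.inl _ => True
  | Sum.inr p, Sum.inr q => p.1.2 ⊆ q.1.2 ∧ R₀ p.1.1 q.1.1

/-- The projection sending each world of the unravelling to the world of F₀
it is a copy of. -/
def unravelProj {F₀ : Type} (R₀ : F₀ → F₀ → Prop) (w₀ b : F₀) :
    Unravel R₀ w₀ b → F₀
  | Sum.inl x => x.1
  | Sum.inr p => p.1.1


section Aux

variable {F₀ : Type} {R₀ : F₀ → F₀ → Prop} {w₀ : F₀}

lemma path_end_mem (hrefl : Reflexive R₀) (htrans : Transitive R₀)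
    (hw₀ : ∀ u, R₀ w₀ u) {u : F₀} {t : Set F₀} (h : IsPath R₀ w₀ u t) : u ∈ t := by
  obtain ⟨hsub, hcl, hch, hmax⟩ := h
  have hs : (t ∪ {y | equivRel R₀ u y}) = t := by
    apply hmax
    · exact Set.subset_union_left
    · rintro x (hx | ⟨h1, h2⟩)
      · exact hsub hx
      · exact ⟨hw₀ x, h2⟩
    · rintro x (hx | hx) y hxy
      · exact Or.inl (hcl x hx y hxy)
      · exact Or.inr ⟨htrans hx.1 hxy.1, htrans hxy.2 hx.2⟩
    · rintro x (hx | hx) y (hy | hy)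
      · exact hch x hx y hy
      · exact Or.inl (htrans (hsub hx).2 hy.1)
      · exact Or.inr (htrans (hsub hy).2 hx.1)
      · exact Or.inl (htrans hx.2 hy.1)
  rw [← hs]; exact Or.inr ⟨hrefl u, hrefl u⟩

lemma root_cluster_sub (htrans : Transitive R₀) (hw₀ : ∀ u, R₀ w₀ u)
    {u : F₀} {t : Set F₀} (h : IsPath R₀ w₀ u t) : {x | equivRel R₀ w₀ x} ⊆ t := by
  obtain ⟨hsub, hcl, hch, hmax⟩ := h
  have hs : (t ∪ {x | equivRel R₀ w₀ x}) = t := by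
    apply hmax
    · exact Set.subset_union_left
    · rintro x (hx | hx)
      · exact hsub hx
      · exact ⟨hx.1, htrans hx.2 (hw₀ u)⟩
    · rintro x (hx | hx) y hxy
      · exact Or.inl (hcl x hx y hxy)
      · exact Or.inr ⟨htrans hx.1 hxy.1, htrans hxy.2 hx.2⟩
    · rintro x (hx | hx) y (hy | hy)
      · exact hch x hx y hy
      · exact Or.inr (htrans hy.2 (hsub hx).1)
      · exact Or.inl (htrans hx.2 (hsub hy).1)
      · exact Or.inl (htrans hx.2 hy.1)
  rw [← hs]; exact fun x hx => Or.inr hx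

lemma path_sub (htrans : Transitive R₀) {u v : F₀} {tu tv tp : Set F₀}
    (hu : IsPath R₀ w₀ u tu) (hv : IsPath R₀ w₀ v tv)
    (h1 : tu ⊆ tp) (h2 : tv ⊆ tp)
    (hchp : ∀ x ∈ tp, ∀ y ∈ tp, R₀ x y ∨ R₀ y x) (huv : R₀ u v) : tu ⊆ tv := by
  have hs : (tv ∪ tu) = tv := by
    apply hv.2.2.2
    · exact Set.subset_union_left
    · rintro x (hx | hx)
      · exact hv.1 hx
      · exact ⟨(hu.1 hx).1, htrans (hu.1 hx).2 huv⟩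
    · rintro x (hx | hx) y hxy
      · exact Or.inl (hv.2.1 x hx y hxy)
      · exact Or.inr (hu.2.1 x hx y hxy)
    · rintro x (hx | hx) y (hy | hy)
      · exact hv.2.2.1 x hx y hy
      · exact hchp x (h2 hx) y (h1 hy)
      · exact hchp x (h1 hx) y (h2 hy)
      · exact hu.2.2.1 x hx y hy
  rw [← hs]; exact fun x hx => Or.inr hx

lemma exists_path_ext [Finite F₀] (htrans : Transitive R₀)
    {u v : F₀} {t : Set F₀} (huv : R₀ u v) (ht : IsPath R₀ w₀ u t) :
    ∃ s, t ⊆ s ∧ IsPath R₀ w₀ v s := by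
  classical
  set S : Set (Set F₀) := {s | t ⊆ s ∧ s ⊆ {x | R₀ w₀ x ∧ R₀ x v} ∧
    (∀ x ∈ s, ∀ y, equivRel R₀ x y → y ∈ s) ∧
    (∀ x ∈ s, ∀ y ∈ s, R₀ x y ∨ R₀ y x)} with hS
  have htS : t ∈ S :=
    ⟨subset_refl _, fun x hx => ⟨(ht.1 hx).1, htrans (ht.1 hx).2 huv⟩, ht.2.1, ht.2.2.1⟩
  obtain ⟨m, hmS, hmax⟩ :=
    Set.Finite.exists_maximalFor id S (Set.toFinite S) ⟨t, htS⟩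
  refine ⟨m, hmS.1, hmS.2.1, hmS.2.2.1, hmS.2.2.2, ?_⟩
  intro s hms hs1 hs2 hs3
  exact Set.Subset.antisymm (hmax ⟨hmS.1.trans hms, hs1, hs2, hs3⟩ hms) hms

lemma bisim_sat {α W W₀ : Type} (R : W → W → Prop) (R₀ : W₀ → W₀ → Prop)
    (V₀ : α → W₀ → Prop) (π : W → W₀)
    (hforth : ∀ f g, R f g → R₀ (π f) (π g))
    (hback : ∀ f v, R₀ (π f) v → ∃ g, R f g ∧ π g = v)
    (φ : ModalFormula α) :
    ∀ f, sat R (fun a g => V₀ a (π g)) f φ ↔ sat R₀ V₀ (π f) φ := by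
  induction φ with
  | var p => exact fun f => Iff.rfl
  | fls => exact fun f => Iff.rfl
  | imp φ ψ ihφ ihψ => exact fun f => imp_congr (ihφ f) (ihψ f)
  | box φ ih =>
    intro f
    constructor
    · intro h v hv
      obtain ⟨g, hg, rfl⟩ := hback f v hv
      exact (ih g).1 (h g hg)
    · intro h g hg
      exact (ih g).2 (h (π g) (hforth f g hg))

end Aux

/-- for a Kripke model M₀ on a finite directed partial
pre-order F₀ with largest cluster [b] and with w₀ in the smallest cluster,
the partial unravelling F (with copied valuation) is a baled pre-tree:
the relation is reflexive and transitive, the copies of the top cluster are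
maximal, the predecessors of any non-top world are linearly ordered, and
there is a root; moreover the projection is a bisimulation between the
unravelled model M and M₀, so every copy of w₀ in M satisfies exactly the
same modal formulas as w₀ does in M₀. -/
theorem partial_unravelling_baled_pretree_and_bisimulation
    {α F₀ : Type} [Fintype F₀] (R₀ : F₀ → F₀ → Prop)
    (hrefl : Reflexive R₀) (htrans : Transitive R₀)
    (hdir : ∀ u v, ∃ z, R₀ u z ∧ R₀ v z)
    (w₀ b : F₀) (hw₀ : ∀ u, R₀ w₀ u) (hb : ∀ u, R₀ u b)
    (V₀ : α → F₀ → Prop) :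
    -- F is a baled pre-tree:
    Reflexive (unravelRel R₀ w₀ b) ∧
    Transitive (unravelRel R₀ w₀ b) ∧
    (∀ (f : Unravel R₀ w₀ b) (x : {x : F₀ // equivRel R₀ x b}),
      unravelRel R₀ w₀ b f (Sum.inl x)) ∧
    (∀ (p q r : {p : F₀ × Set F₀ //
        ¬ equivRel R₀ p.1 b ∧ IsPath R₀ w₀ p.1 p.2}),
      unravelRel R₀ w₀ b (Sum.inr q) (Sum.inr p) →
      unravelRel R₀ w₀ b (Sum.inr r) (Sum.inr p) →
      unravelRel R₀ w₀ b (Sum.inr q) (Sum.inr r) ∨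
        unravelRel R₀ w₀ b (Sum.inr r) (Sum.inr q)) ∧
    (∃ f₀ : Unravel R₀ w₀ b, ∀ f, unravelRel R₀ w₀ b f₀ f) ∧
    -- the projection is a bisimulation between M and M₀:
    (∀ (f : Unravel R₀ w₀ b) (a : α),
      (fun a g => V₀ a (unravelProj R₀ w₀ b g)) a f ↔
        V₀ a (unravelProj R₀ w₀ b f)) ∧
    (∀ f g : Unravel R₀ w₀ b, unravelRel R₀ w₀ b f g →
      R₀ (unravelProj R₀ w₀ b f) (unravelProj R₀ w₀ b g)) ∧
    (∀ (f : Unravel R₀ w₀ b) (v : F₀), R₀ (unravelProj R₀ w₀ b f) v →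
      ∃ g, unravelRel R₀ w₀ b f g ∧ unravelProj R₀ w₀ b g = v) ∧
    -- consequently every copy of w₀ satisfies the same modal formulas as w₀:
    (∀ f : Unravel R₀ w₀ b, unravelProj R₀ w₀ b f = w₀ →
      ∀ φ : ModalFormula α,
        ModalFormula.sat (unravelRel R₀ w₀ b)
            (fun a g => V₀ a (unravelProj R₀ w₀ b g)) f φ ↔
          ModalFormula.sat R₀ V₀ w₀ φ)  := by
  classical
  have hprojR : ∀ f g : Unravel R₀ w₀ b, unravelRel R₀ w₀ b f g →
      R₀ (unravelProj R₀ w₀ b f) (unravelProj R₀ w₀ b g) := by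
    rintro (x | p) (y | q) h
    · exact htrans x.2.1 y.2.2
    · exact h.elim
    · exact htrans (hb p.1.1) y.2.2
    · exact h.2
  have hback : ∀ (f : Unravel R₀ w₀ b) (v : F₀), R₀ (unravelProj R₀ w₀ b f) v →
      ∃ g, unravelRel R₀ w₀ b f g ∧ unravelProj R₀ w₀ b g = v := by
    rintro (x | p) v hv
    · exact ⟨Sum.inl ⟨v, hb v, htrans x.2.2 hv⟩, trivial, rfl⟩
    · by_cases hvb : equivRel R₀ v b
      · exact ⟨Sum.inl ⟨v, hvb⟩, trivial, rfl⟩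
      · obtain ⟨s, hts, hs⟩ := exists_path_ext htrans hv p.2.2
        exact ⟨Sum.inr ⟨(v, s), hvb, hs⟩, ⟨hts, hv⟩, rfl⟩
  have hreflU : Reflexive (unravelRel R₀ w₀ b) := by
    rintro (x | p)
    · trivial
    · exact ⟨subset_refl _, hrefl _⟩
  have htransU : Transitive (unravelRel R₀ w₀ b) := by
    rintro (x | p) (y | q) (z | r) h1 h2
    · trivial
    · exact h2.elim
    · exact h1.elim
    · exact h1.elim
    · trivial
    · exact h2.elim
    · trivial
    · exact ⟨h1.1.trans h2.1, htrans h1.2 h2.2⟩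
  refine ⟨hreflU, htransU, ?_, ?_, ?_, fun f a => Iff.rfl, hprojR, hback, ?_⟩
  · rintro (y | q) x <;> trivial
  · intro p q r hq hr
    have hq1 : q.1.1 ∈ p.1.2 := hq.1 (path_end_mem hrefl htrans hw₀ q.2.2)
    have hr1 : r.1.1 ∈ p.1.2 := hr.1 (path_end_mem hrefl htrans hw₀ r.2.2)
    rcases p.2.2.2.2.1 _ hq1 _ hr1 with h | h
    · exact Or.inl ⟨path_sub htrans q.2.2 r.2.2 hq.1 hr.1 p.2.2.2.2.1 h, h⟩
    · exact Or.inr ⟨path_sub htrans r.2.2 q.2.2 hr.1 hq.1 p.2.2.2.2.1 h, h⟩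
  · by_cases hwb : equivRel R₀ w₀ b
    · refine ⟨Sum.inl ⟨w₀, hwb⟩, ?_⟩
      rintro (x | p)
      · trivial
      · exact absurd ⟨hb p.1.1, htrans hwb.2 (hw₀ p.1.1)⟩ p.2.1
    · have ht₀ : IsPath R₀ w₀ w₀ {x | equivRel R₀ w₀ x} :=
        ⟨fun x hx => hx,
         fun x hx y hxy => ⟨htrans hx.1 hxy.1, htrans hxy.2 hx.2⟩,
         fun x hx y hy => Or.inl (htrans hx.2 hy.1),
         fun s hts hs _ _ => Set.Subset.antisymm hs hts⟩
      refine ⟨Sum.inr ⟨(w₀, {x | equivRel R₀ w₀ x}), hwb, ht₀⟩, ?_⟩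
      rintro (x | p)
      · trivial
      · exact ⟨root_cluster_sub htrans hw₀ p.2.2, hw₀ p.1.1⟩
  · intro f hf φ
    have h := bisim_sat (unravelRel R₀ w₀ b) R₀ V₀ (unravelProj R₀ w₀ b) hprojR hback φ f
    rw [hf] at h
    exact h
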